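/- (Abstract form of the defect relation, Corollary 2.5, case R < ∞) Let 0 < R < ∞, let d, μ̃, m, m̃ be positive real numbers, and let T, N₁ : (0,R) → [0,∞) be nondecreasing functions. Assume: (a) limsup_{r→R⁻} T(r)/log(1/(R−r)) = ∞; (b) there exist a measurable set E ⊆ (0,R) with ∫_E dr/(R−r) < ∞ and constants C₁, C₂, C₃ ≥ 0 such that T(r) ≤ (m/m̃)·N₁(r) + C₁·log⁺ T(r) + C₂·log(1/(R−r)) + C₃ for all r ∈ (0,R) \ E. Then liminf_{r→R⁻} ( 1 − N₁(r)/(d·T(r)) ) ≤ 1 − m̃/(m·d). -/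

import Mathlib

open MeasureTheory Filter
open scoped ENNReal
open scoped Topology

/-- `log⁺ x = max (log x) 0`. -/
noncomputable def logPlus (x : ℝ) : ℝ := max (Real.log x) 0

lemma logPlus_le_two_sqrt {x : ℝ} (hx : 0 ≤ x) : logPlus x ≤ 2 * Real.sqrt x := by
  unfold logPlus
  apply max_le _ (by positivity)
  rcases eq_or_lt_of_le hx with h | h
  · simp [← h]
  · have h1 : Real.log (Real.sqrt x) ≤ Real.sqrt x - 1 :=
      Real.log_le_sub_one_of_pos (Real.sqrt_pos.mpr h)
    have h2 : Real.log x = 2 * Real.log (Real.sqrt x) := by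
      rw [Real.log_sqrt hx]; ring
    nlinarith [Real.sqrt_nonneg x]

lemma exceptional_tail (R : ℝ) (E : Set ℝ) (hE_meas : MeasurableSet E)
    (hE_int : (∫⁻ r in E, ENNReal.ofReal (1 / (R - r))) < ⊤) :
    ∃ s₀ < R, ∀ r, s₀ < r → r < R → ∃ r', r' ∈ Set.Ioo r ((r+R)/2) ∧ r' ∉ E := by
  set f : ℝ → ℝ≥0∞ := fun r => ENNReal.ofReal (1/(R-r)) with hf
  have hf_meas : Measurable f := by
    have hsub : Measurable fun r : ℝ => R - r := measurable_const.sub measurable_id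
    exact Measurable.ennreal_ofReal (by simp only [one_div]; exact hsub.inv)
  set ν : Measure ℝ := volume.withDensity f with hν
  have hνE : ν E < ⊤ := by
    rw [hν, withDensity_apply f hE_meas]; exact hE_int
  set S : ℕ → Set ℝ := fun n => E ∩ Set.Ioo (R - 1/(n+1)) R with hS
  have hanti : Antitone S := by
    intro n k hnk
    apply Set.inter_subset_inter_right
    apply Set.Ioo_subset_Ioo _ le_rfl
    have : (1:ℝ)/(k+1) ≤ 1/(n+1) := by
      apply one_div_le_one_div_of_le (by positivity)
      exact_mod_cast by omega
    linarith
  have hempty : ⋂ n, S n = ∅ := by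
    rw [Set.eq_empty_iff_forall_notMem]
    intro x hx
    simp only [hS, Set.mem_iInter, Set.mem_inter_iff, Set.mem_Ioo] at hx
    have hxR : x < R := (hx 0).2.2
    obtain ⟨n, hn⟩ := exists_nat_one_div_lt (show 0 < R - x by linarith)
    have := (hx n).2.1
    linarith
  have htend : Tendsto (ν ∘ S) atTop (𝓝 (ν (⋂ n, S n))) := by
    apply tendsto_measure_iInter_atTop
    · exact fun n => (hE_meas.inter measurableSet_Ioo).nullMeasurableSet
    · exact hanti
    · exact ⟨0, ((measure_mono Set.inter_subset_left).trans_lt hνE).ne⟩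
  rw [hempty, measure_empty] at htend
  have hev := htend.eventually_lt_const (show (0:ℝ≥0∞) < ENNReal.ofReal (1/2) by
    exact ENNReal.ofReal_pos.mpr (by norm_num))
  obtain ⟨n, hn⟩ := hev.exists
  refine ⟨R - 1/(n+1), ?_, ?_⟩
  · have h : (0:ℝ) < 1/((n:ℝ)+1) := by positivity
    linarith
  intro r hs₀r hrR
  by_contra hcon
  push_neg at hcon
  have hsub : Set.Ioo r ((r+R)/2) ⊆ S n := by
    intro x hx
    rcases hx with ⟨hx1, hx2⟩
    refine ⟨hcon x ⟨hx1, hx2⟩, by linarith, by linarith⟩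
  have hRr : 0 < R - r := by linarith
  have hlow : ENNReal.ofReal (1/2) ≤ ν (Set.Ioo r ((r+R)/2)) := by
    rw [hν, withDensity_apply f measurableSet_Ioo]
    calc ENNReal.ofReal (1/2)
        = ENNReal.ofReal (1/(R-r)) * volume (Set.Ioo r ((r+R)/2)) := by
          rw [Real.volume_Ioo, ← ENNReal.ofReal_mul (by positivity)]
          congr 1
          field_simp
          ring
      _ = ∫⁻ _ in Set.Ioo r ((r+R)/2), ENNReal.ofReal (1/(R-r)) := by
          rw [setLIntegral_const]
      _ ≤ ∫⁻ x in Set.Ioo r ((r+R)/2), f x := by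
          apply setLIntegral_mono hf_meas
          intro x hx
          apply ENNReal.ofReal_le_ofReal
          apply one_div_le_one_div_of_le (by rcases hx with ⟨h1,h2⟩; linarith)
          rcases hx with ⟨h1, h2⟩; linarith
  exact absurd hn (not_lt.mpr (hlow.trans (measure_mono hsub)))

set_option maxHeartbeats 1000000 in
/-- **Abstract form of the defect relation (Corollary 2.5, case `R < ∞`).**
Let `0 < R < ∞`, let `d, μ̃, m, m̃ > 0`, and let `T, N₁ : (0,R) → [0,∞)` be
nondecreasing. If (a) `limsup_{r→R⁻} T(r)/log(1/(R−r)) = ∞`, and (b) there are a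
measurable `E ⊆ (0,R)` with `∫_E dr/(R−r) < ∞` and constants `C₁, C₂, C₃ ≥ 0` with
`T(r) ≤ (m/m̃)·N₁(r) + C₁·log⁺ T(r) + C₂·log(1/(R−r)) + C₃` off `E`, then
`liminf_{r→R⁻} (1 − N₁(r)/(d·T(r))) ≤ 1 − m̃/(m·d)`. -/
theorem abstract_defect_relation (R d μt m mt : ℝ)
    (hR : 0 < R) (hd : 0 < d) (hμt : 0 < μt) (hm : 0 < m) (hmt : 0 < mt)
    (T N₁ : ℝ → ℝ)
    (hT0 : ∀ r ∈ Set.Ioo 0 R, 0 ≤ T r) (hN0 : ∀ r ∈ Set.Ioo 0 R, 0 ≤ N₁ r)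
    (hTmono : MonotoneOn T (Set.Ioo 0 R)) (hNmono : MonotoneOn N₁ (Set.Ioo 0 R))
    (ha : Filter.limsup (fun r => ((T r / Real.log (1 / (R - r)) : ℝ) : EReal))
      (nhdsWithin R (Set.Iio R)) = ⊤)
    (hb : ∃ E ⊆ Set.Ioo 0 R, MeasurableSet E ∧
      (∫⁻ r in E, ENNReal.ofReal (1 / (R - r))) < ⊤ ∧
      ∃ C₁ C₂ C₃ : ℝ, 0 ≤ C₁ ∧ 0 ≤ C₂ ∧ 0 ≤ C₃ ∧
        ∀ r ∈ Set.Ioo 0 R \ E,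
          T r ≤ (m / mt) * N₁ r + C₁ * logPlus (T r)
            + C₂ * Real.log (1 / (R - r)) + C₃) :
    Filter.liminf (fun r => ((1 - N₁ r / (d * T r) : ℝ) : EReal))
        (nhdsWithin R (Set.Iio R))
      ≤ ((1 - mt / (m * d) : ℝ) : EReal) := by
  obtain ⟨E, hE_sub, hE_meas, hE_int, C₁, C₂, C₃, hC₁, hC₂, hC₃, hbb⟩ := hb
  obtain ⟨s₀, hs₀R, hgap⟩ := exceptional_tail R E hE_meas hE_int
  have hlog2 : 0 < Real.log 2 := Real.log_pos (by norm_num)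
  -- Key frequently statement
  have key : ∀ ε : ℝ, 0 < ε → ∃ᶠ r in nhdsWithin R (Set.Iio R),
      ((1 - N₁ r / (d * T r) : ℝ) : EReal) ≤ ((1 - mt / (m * d) + ε : ℝ) : EReal) := by
    intro ε hε
    have hc : 0 < ε * d * m := by positivity
    -- choose M
    obtain ⟨M, hM1, hMa, hMb, hMc⟩ : ∃ M : ℝ, 1 ≤ M ∧ 6*C₂*mt ≤ ε*d*m*M ∧
        3*C₃*mt ≤ ε*d*m*(M*Real.log 2) ∧ (6*C₁*mt)^2 ≤ (ε*d*m)^2*(M*Real.log 2) := by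
      refine ⟨max 1 (max (6*C₂*mt/(ε*d*m)) (max (3*C₃*mt/(ε*d*m*Real.log 2))
        ((6*C₁*mt)^2/((ε*d*m)^2*Real.log 2)))), le_max_left _ _, ?_, ?_, ?_⟩
      · have h1 : 6*C₂*mt/(ε*d*m) ≤ max 1 (max (6*C₂*mt/(ε*d*m)) (max (3*C₃*mt/(ε*d*m*Real.log 2))
          ((6*C₁*mt)^2/((ε*d*m)^2*Real.log 2)))) := le_trans (le_max_left _ _) (le_max_right _ _)
        calc 6*C₂*mt = (6*C₂*mt/(ε*d*m))*(ε*d*m) := by field_simp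
          _ ≤ _ := by rw [mul_comm (ε*d*m)]; exact mul_le_mul_of_nonneg_right h1 hc.le
      · have h1 : 3*C₃*mt/(ε*d*m*Real.log 2) ≤ max 1 (max (6*C₂*mt/(ε*d*m))
          (max (3*C₃*mt/(ε*d*m*Real.log 2)) ((6*C₁*mt)^2/((ε*d*m)^2*Real.log 2)))) :=
          le_trans (le_trans (le_max_left _ _) (le_max_right _ _)) (le_max_right _ _)
        have hpos : 0 < ε*d*m*Real.log 2 := by positivity
        calc 3*C₃*mt = (3*C₃*mt/(ε*d*m*Real.log 2))*(ε*d*m*Real.log 2) := by field_simp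
          _ ≤ _ := by
              have := mul_le_mul_of_nonneg_right h1 hpos.le
              calc (3*C₃*mt/(ε*d*m*Real.log 2))*(ε*d*m*Real.log 2) ≤ _ := this
                _ = ε*d*m*(_*Real.log 2) := by ring
      · have h1 : (6*C₁*mt)^2/((ε*d*m)^2*Real.log 2) ≤ max 1 (max (6*C₂*mt/(ε*d*m))
          (max (3*C₃*mt/(ε*d*m*Real.log 2)) ((6*C₁*mt)^2/((ε*d*m)^2*Real.log 2)))) :=
          le_trans (le_trans (le_max_right _ _) (le_max_right _ _)) (le_max_right _ _)
        have hpos : 0 < (ε*d*m)^2*Real.log 2 := by positivity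
        calc (6*C₁*mt)^2 = ((6*C₁*mt)^2/((ε*d*m)^2*Real.log 2))*((ε*d*m)^2*Real.log 2) := by
              field_simp
          _ ≤ _ := by
              have := mul_le_mul_of_nonneg_right h1 hpos.le
              calc ((6*C₁*mt)^2/((ε*d*m)^2*Real.log 2))*((ε*d*m)^2*Real.log 2) ≤ _ := this
                _ = (ε*d*m)^2*(_*Real.log 2) := by ring
    have hM0 : 0 < M := lt_of_lt_of_le one_pos hM1
    rw [Filter.frequently_iff]
    intro U hU
    obtain ⟨s, hsR, hsub⟩ := (mem_nhdsLT_iff_exists_Ioo_subset' hs₀R).mp hU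
    set s' := max s (max s₀ (max (R - 1/2) (R/2))) with hs'
    have hs'R : s' < R := by
      apply max_lt hsR.out
      apply max_lt hs₀R
      apply max_lt <;> linarith
    -- frequently large T
    have hfr : ∃ᶠ r in nhdsWithin R (Set.Iio R),
        (M : EReal) < ((T r / Real.log (1 / (R - r)) : ℝ) : EReal) := by
      apply Filter.frequently_lt_of_lt_limsup
      · isBoundedDefault
      · rw [ha]; exact EReal.coe_lt_top M
    have hmem : Set.Ioo s' R ∈ nhdsWithin R (Set.Iio R) := Ioo_mem_nhdsLT hs'R
    obtain ⟨r, hrM, hrIoo⟩ := (hfr.and_eventually (eventually_of_mem hmem (fun x hx => hx))).exists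
    obtain ⟨hs'r, hrR⟩ := hrIoo
    have hrs : s < r := lt_of_le_of_lt (le_max_left _ _) hs'r
    have hrs₀ : s₀ < r := lt_of_le_of_lt (le_trans (le_max_left _ _) (le_max_right _ _)) hs'r
    have hr12 : R - 1/2 < r :=
      lt_of_le_of_lt (le_trans (le_trans (le_max_left _ _) (le_max_right _ _)) (le_max_right _ _)) hs'r
    have hrhalf : R/2 < r :=
      lt_of_le_of_lt (le_trans (le_trans (le_max_right _ _) (le_max_right _ _)) (le_max_right _ _)) hs'r
    have hr0 : 0 < r := by linarith
    have hRr : 0 < R - r := by linarith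
    set L := Real.log (1/(R-r)) with hLdef
    have h2le : (2:ℝ) < 1/(R-r) := by rw [lt_div_iff₀ hRr]; linarith
    have hlogL : Real.log 2 ≤ L := Real.log_le_log (by norm_num) h2le.le
    have hLpos : 0 < L := lt_of_lt_of_le hlog2 hlogL
    have hrM' : M < T r / L := EReal.coe_lt_coe_iff.mp hrM
    have hTr : M * L < T r := (lt_div_iff₀ hLpos).mp hrM'
    -- pick r' off E
    obtain ⟨r', ⟨hrr', hr'mid⟩, hr'E⟩ := hgap r hrs₀ hrR
    have hr'R : r' < R := by linarith
    have hr'Ioo : r' ∈ Set.Ioo 0 R := ⟨by linarith, hr'R⟩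
    have hrIoo0 : r ∈ Set.Ioo 0 R := ⟨hr0, hrR⟩
    have hT' : T r ≤ T r' := hTmono hrIoo0 hr'Ioo hrr'.le
    have hT'0 : 0 ≤ T r' := hT0 _ hr'Ioo
    have hT'pos : 0 < T r' := lt_of_lt_of_le (lt_of_lt_of_le (by positivity) hTr.le) hT'
    have hMLT' : M * L ≤ T r' := le_trans hTr.le hT'
    have hMlog2 : M * Real.log 2 ≤ T r' :=
      le_trans (mul_le_mul_of_nonneg_left hlogL hM0.le) hMLT'
    have hRr' : 0 < R - r' := by linarith
    set L' := Real.log (1/(R-r')) with hL'def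
    have hL'2 : L' ≤ 2 * L := by
      have hhalf : (R-r)/2 ≤ R - r' := by linarith
      have h1div : 1/(R-r') ≤ 2/(R-r) := by
        have := one_div_le_one_div_of_le (by linarith : (0:ℝ) < (R-r)/2) hhalf
        rwa [one_div_div] at this
      have hL'val : L' ≤ Real.log (2/(R-r)) := Real.log_le_log (by positivity) h1div
      have heq : Real.log (2/(R-r)) = Real.log 2 + L := by
        rw [Real.log_div two_ne_zero (ne_of_gt hRr), hLdef, one_div, Real.log_inv]
        ring
      linarith
    -- second main theorem at r'
    have hbr' := hbb r' ⟨hr'Ioo, hr'E⟩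
    -- sqrt bound
    have hsq6 : 6*C₁*mt ≤ ε*d*m*Real.sqrt (T r') := by
      have h1 : (6*C₁*mt)^2 ≤ (ε*d*m)^2 * T r' :=
        le_trans hMc (mul_le_mul_of_nonneg_left hMlog2 (by positivity))
      calc 6*C₁*mt = Real.sqrt ((6*C₁*mt)^2) := (Real.sqrt_sq (by positivity)).symm
        _ ≤ Real.sqrt ((ε*d*m)^2 * T r') := Real.sqrt_le_sqrt h1
        _ = ε*d*m*Real.sqrt (T r') := by
            rw [Real.sqrt_mul (sq_nonneg _), Real.sqrt_sq hc.le]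
    have hlp : logPlus (T r') ≤ 2*Real.sqrt (T r') := logPlus_le_two_sqrt hT'0
    have hss : Real.sqrt (T r') * Real.sqrt (T r') = T r' := Real.mul_self_sqrt hT'0
    have p1 : 6*C₁*mt*Real.sqrt (T r') ≤ ε*d*m*T r' := by
      calc 6*C₁*mt*Real.sqrt (T r')
          ≤ ε*d*m*Real.sqrt (T r')*Real.sqrt (T r') :=
            mul_le_mul_of_nonneg_right hsq6 (Real.sqrt_nonneg (T r'))
        _ = ε*d*m*T r' := by rw [mul_assoc, hss]
    have p2 : 0 ≤ (mt*C₁) * (2*Real.sqrt (T r') - logPlus (T r')) :=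
      mul_nonneg (mul_nonneg hmt.le hC₁) (sub_nonneg.mpr hlp)
    have h1 : 3*(mt*(C₁*logPlus (T r'))) ≤ ε*d*m*T r' := by
      linarith only [p1, p2]
    have p3 : 0 ≤ (mt*C₂) * (2*L - L') :=
      mul_nonneg (mul_nonneg hmt.le hC₂) (sub_nonneg.mpr hL'2)
    have p4 : 0 ≤ (ε*d*m*M - 6*C₂*mt) * L :=
      mul_nonneg (sub_nonneg.mpr hMa) hLpos.le
    have p5 : 0 ≤ (ε*d*m) * (T r' - M*L) :=
      mul_nonneg hc.le (sub_nonneg.mpr hMLT')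
    have h2 : 3*(mt*(C₂*L')) ≤ ε*d*m*T r' := by
      linarith only [p3, p4, p5]
    have p6 : 0 ≤ (ε*d*m) * (T r' - M*Real.log 2) :=
      mul_nonneg hc.le (sub_nonneg.mpr hMlog2)
    have h3 : 3*(mt*C₃) ≤ ε*d*m*T r' := by
      linarith only [hMb, p6]
    have keydiv : (mt/m)*(C₁*logPlus (T r') + C₂*L' + C₃) ≤ ε*(d*T r') := by
      rw [div_mul_eq_mul_div, div_le_iff₀ hm]
      linarith only [h1, h2, h3]

    have hN'lb : (mt/m)*(T r' - C₁*logPlus (T r') - C₂*L' - C₃) ≤ N₁ r' := by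
      have step : T r' - C₁*logPlus (T r') - C₂*L' - C₃ ≤ (m/mt)*N₁ r' := by
        rw [hL'def]; linarith [hbr']
      have e3 : (mt/m)*((m/mt)*N₁ r') = N₁ r' := by field_simp
      calc (mt/m)*(T r' - C₁*logPlus (T r') - C₂*L' - C₃)
          ≤ (mt/m)*((m/mt)*N₁ r') := by
            apply mul_le_mul_of_nonneg_left step (by positivity)
        _ = N₁ r' := e3
    have hG : (mt/(m*d) - ε)*(d*T r') ≤ N₁ r' := by
      have e1 : (mt/(m*d) - ε)*(d*T r') = (mt/m)*T r' - ε*(d*T r') := by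
        field_simp
      have e2 : (mt/m)*(T r' - C₁*logPlus (T r') - C₂*L' - C₃)
          = (mt/m)*T r' - (mt/m)*(C₁*logPlus (T r') + C₂*L' + C₃) := by ring
      rw [e1]
      rw [e2] at hN'lb
      linarith [keydiv, hN'lb]
    have hfinal : mt/(m*d) - ε ≤ N₁ r' / (d * T r') :=
      (le_div_iff₀ (by positivity)).mpr hG
    refine ⟨r', hsub ⟨hrs.trans hrr', hr'R⟩, ?_⟩
    exact EReal.coe_le_coe_iff.mpr (by linarith)
  -- conclude
  apply le_of_forall_gt_imp_ge_of_dense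
  intro c hc
  obtain ⟨x, hx1, hx2⟩ := EReal.lt_iff_exists_real_btwn.mp hc
  have hx1' : (1 - mt/(m*d) : ℝ) < x := EReal.coe_lt_coe_iff.mp hx1
  have hε : 0 < x - (1 - mt/(m*d)) := by linarith
  have hlim := Filter.liminf_le_of_frequently_le (key _ hε)
  calc Filter.liminf (fun r => ((1 - N₁ r / (d * T r) : ℝ) : EReal)) (nhdsWithin R (Set.Iio R))
      ≤ ((1 - mt/(m*d) + (x - (1 - mt/(m*d))) : ℝ) : EReal) := hlim
    _ = (x : EReal) := by norm_num
    _ ≤ c := hx2.le
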